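/- The symmetric 2×2 matrices Σ₀ = [[-21/38, 0],[0, -1/2]], Σ₁ = [[-15463/1026, -955/108],[-955/108, -11/2]], and Σ₂ = [[-21/38, -35/108],[-35/108, -143/54]] are all negative definite, and the largest eigenvalue among all eigenvalues of Σ₀, Σ₁, Σ₂ equals λ* = -10553/1026 + 5√17026937/2052, which satisfies λ* ≤ -0.231. -/

import Mathlib

noncomputable def Sig0 : Matrix (Fin 2) (Fin 2) ℝ := !![-21/38, 0; 0, -1/2]
noncomputable def Sig1 : Matrix (Fin 2) (Fin 2) ℝ :=
  !![-15463/1026, -955/108; -955/108, -11/2]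
noncomputable def Sig2 : Matrix (Fin 2) (Fin 2) ℝ :=
  !![-21/38, -35/108; -35/108, -143/54]

noncomputable def lamStar : ℝ := -10553 / 1026 + 5 * Real.sqrt 17026937 / 2052

lemma posDef_of_2x2 (a b d : ℝ) (ha : 0 < a) (hdet : 0 < a * d - b * b) :
    (!![a, b; b, d] : Matrix (Fin 2) (Fin 2) ℝ).PosDef := by
  rw [Matrix.posDef_iff_dotProduct_mulVec]
  constructor
  · ext i j
    fin_cases i <;> fin_cases j <;> simp [Matrix.conjTranspose_apply]
  · intro x hx
    have h : x 0 ≠ 0 ∨ x 1 ≠ 0 := by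
      by_contra h
      push_neg at h
      apply hx
      funext i; fin_cases i <;> simp [h.1, h.2]
    have hdv : dotProduct (star x) ((!![a, b; b, d] : Matrix (Fin 2) (Fin 2) ℝ).mulVec x)
        = a * x 0 * x 0 + 2 * b * x 0 * x 1 + d * x 1 * x 1 := by
      simp [dotProduct, Matrix.mulVec, Fin.sum_univ_two]
      ring
    rw [hdv]
    have hd : 0 < d := by nlinarith [sq_nonneg b]
    rcases h with h | h
    · nlinarith [sq_nonneg (b * x 0 + d * x 1), mul_pos hdet (mul_self_pos.mpr h), sq_nonneg (x 1)]
    · nlinarith [sq_nonneg (a * x 0 + b * x 1), mul_pos hdet (mul_self_pos.mpr h), sq_nonneg (x 0)]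

lemma mem_spec_iff (M : Matrix (Fin 2) (Fin 2) ℝ) (μ : ℝ) :
    μ ∈ spectrum ℝ M ↔ (μ • (1 : Matrix (Fin 2) (Fin 2) ℝ) - M).det = 0 := by
  rw [spectrum.mem_iff, Matrix.isUnit_iff_isUnit_det, isUnit_iff_ne_zero, not_ne_iff,
    Algebra.algebraMap_eq_smul_one]

lemma det_char (a b d μ : ℝ) :
    (μ • (1 : Matrix (Fin 2) (Fin 2) ℝ) - !![a, b; b, d]).det
      = (μ - a) * (μ - d) - b * b := by
  simp [Matrix.det_fin_two]
  try ring

lemma sqrt_lb : (4016 : ℝ) ≤ Real.sqrt 17026937 := by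
  rw [show (4016:ℝ) = Real.sqrt (4016^2) by rw [Real.sqrt_sq]; norm_num]
  apply Real.sqrt_le_sqrt; norm_num

lemma sqrt_ub : Real.sqrt 17026937 ≤ 4126.4 := by
  rw [show (4126.4:ℝ) = Real.sqrt (4126.4^2) by rw [Real.sqrt_sq]; norm_num]
  apply Real.sqrt_le_sqrt; norm_num

lemma sqrt_sq' : Real.sqrt 17026937 ^ 2 = 17026937 := Real.sq_sqrt (by norm_num)

/-- `Σ₀, Σ₁, Σ₂` are negative definite, and the largest of all their eigenvalues is
`λ* = -10553/1026 + 5√17026937/2052 ≤ -0.231`. -/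
theorem stmt12 :
    (-Sig0).PosDef ∧ (-Sig1).PosDef ∧ (-Sig2).PosDef ∧
    lamStar ∈ spectrum ℝ Sig0 ∪ spectrum ℝ Sig1 ∪ spectrum ℝ Sig2 ∧
    (∀ μ ∈ spectrum ℝ Sig0 ∪ spectrum ℝ Sig1 ∪ spectrum ℝ Sig2, μ ≤ lamStar) ∧
    lamStar ≤ -0.231 := by
  have hS := sqrt_sq'
  have hlb := sqrt_lb
  have hub := sqrt_ub
  refine ⟨?_, ?_, ?_, ?_, ?_, ?_⟩
  · have : -Sig0 = !![(21:ℝ)/38, 0; 0, 1/2] := by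
      simp [Sig0]; norm_num [Matrix.neg_apply, ← Matrix.ext_iff, Fin.forall_fin_two]
    rw [this]; exact posDef_of_2x2 _ _ _ (by norm_num) (by norm_num)
  · have : -Sig1 = !![(15463:ℝ)/1026, 955/108; 955/108, 11/2] := by
      simp [Sig1]; norm_num [Matrix.neg_apply, ← Matrix.ext_iff, Fin.forall_fin_two]
    rw [this]; exact posDef_of_2x2 _ _ _ (by norm_num) (by norm_num)
  · have : -Sig2 = !![(21:ℝ)/38, 35/108; 35/108, 143/54] := by
      simp [Sig2]; norm_num [Matrix.neg_apply, ← Matrix.ext_iff, Fin.forall_fin_two]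
    rw [this]; exact posDef_of_2x2 _ _ _ (by norm_num) (by norm_num)
  · left; right
    rw [Sig1, mem_spec_iff, det_char, lamStar]
    nlinarith [hS]
  · intro μ hμ
    have hls : -0.56 ≤ lamStar := by
      rw [lamStar]; nlinarith [hlb]
    have hls2 : -1/2 ≤ lamStar := by rw [lamStar]; nlinarith [hlb]
    rcases hμ with (h | h) | h
    · rw [Sig0, mem_spec_iff, det_char] at h
      rcases mul_eq_zero.mp (by linarith [h] : (μ - (-21/38)) * (μ - (-1/2)) = 0) with h' | h' <;>
        linarith
    · rw [Sig1, mem_spec_iff, det_char] at h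
      -- (μ - t)^2 = s^2 with t = -10553/1026, s = 5*sqrt/2052
      have key : (μ - (-10553/1026) - 5 * Real.sqrt 17026937 / 2052) *
          (μ - (-10553/1026) + 5 * Real.sqrt 17026937 / 2052) = 0 := by
        nlinarith [hS]
      rcases mul_eq_zero.mp key with h' | h' <;> rw [lamStar] <;> nlinarith [hlb]
    · rw [Sig2, mem_spec_iff, det_char] at h
      have h1 : μ ≤ -1/2 := by
        by_contra hc
        push_neg at hc
        nlinarith [sq_nonneg (μ + 1/2)]
      have : -1/2 ≤ lamStar := by rw [lamStar]; nlinarith [hlb]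
      linarith
  · rw [lamStar]; nlinarith [hub]
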